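/- Let H be a simple digraph, T a tournament with an ordering σ, φ a partial immersion of H in a σ-interval I, and J ⊆ I a σ-interval. Then for every a ∈ A(H) the trace (φ(a))|_J is a scattered path in J, and the trace φ|_J is a partial immersion of H in J. -/

import Mathlib

namespace TournamentPaper
open Classical

structure Digr (V : Type) where
  Adj : V → V → Prop
  loopless : ∀ v, ¬ Adj v v

namespace Digr
variable {V : Type}
def IsTournament (T : Digr V) : Prop :=
  ∀ u v : V, u ≠ v → (T.Adj u v ↔ ¬ T.Adj v u)
def arcs (T : Digr V) : Set (V × V) := {e | T.Adj e.1 e.2}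
def induce (T : Digr V) (X : Set V) : Digr V where
  Adj u v := u ∈ X ∧ v ∈ X ∧ T.Adj u v
  loopless v h := T.loopless v h.2.2
end Digr

variable {V : Type}

def IsOrdering [Fintype V] (σ : V → ℕ) : Prop :=
  Set.BijOn σ Set.univ (Set.Icc 1 (Fintype.card V))
def cutAt (T : Digr V) (σ : V → ℕ) (γ : ℕ) : Set (V × V) :=
  {e | T.Adj e.1 e.2 ∧ γ < σ e.1 ∧ σ e.2 ≤ γ}
def interval (σ : V → ℕ) (a b : ℕ) : Set V := {v | a < σ v ∧ σ v ≤ b}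
def arcsBetween (T : Digr V) (X Y : Set V) : Set (V × V) :=
  {e | T.Adj e.1 e.2 ∧ e.1 ∈ X ∧ e.2 ∈ Y}
def dPlus [Fintype V] (T : Digr V) (σ : V → ℕ) (a b : ℕ) : Set (V × V) :=
  arcsBetween T (interval σ a b) (interval σ 0 a)
def dMinus [Fintype V] (T : Digr V) (σ : V → ℕ) (a b : ℕ) : Set (V × V) :=
  arcsBetween T (interval σ b (Fintype.card V)) (interval σ a b)
def gPlus [Fintype V] (T : Digr V) (σ : V → ℕ) (a b : ℕ) : Set (V × V) :=
  arcsBetween T (interval σ a b) (interval σ b (Fintype.card V))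
def gMinus [Fintype V] (T : Digr V) (σ : V → ℕ) (a b : ℕ) : Set (V × V) :=
  arcsBetween T (interval σ 0 a) (interval σ a b)
def Flat [Fintype V] (T : Digr V) (σ : V → ℕ) (a b c : ℕ) : Prop :=
  (dPlus T σ a b).ncard ≤ c ∧ (dMinus T σ a b).ncard ≤ c ∧
  ∀ γ : ℕ, (cutAt (T.induce (interval σ a b)) σ γ).ncard ≤ c
def listArcs (l : List V) : List (V × V) := l.zip l.tail

section Scat
variable [Fintype V]

/-- Arcs allowed in a scattered path in `I = σ(a,b]`: `A(T[I]) ∪ ∂(I) ∪ Γ(I)`. -/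
def allowedArcs (T : Digr V) (σ : V → ℕ) (a b : ℕ) : Set (V × V) :=
  (T.induce (interval σ a b)).arcs ∪ dPlus T σ a b ∪ dMinus T σ a b ∪
    gPlus T σ a b ∪ gMinus T σ a b

/-- The first arc of a vertex list (if any). -/
def firstArc (p : List V) : Option (V × V) := (listArcs p).head?

/-- The last arc of a vertex list (if any). -/
def lastArc (p : List V) : Option (V × V) := (listArcs p).getLast?

/-- A scattered path in the σ-interval `σ(a,b]`. -/
structure ScatPath (T : Digr V) (σ : V → ℕ) (a b : ℕ) where
  pieces : List (List V)
  two_le : ∀ p ∈ pieces, 2 ≤ p.length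
  chain : ∀ p ∈ pieces, p.Chain' T.Adj
  nodup : ∀ p ∈ pieces, p.Nodup
  allowed : ∀ p ∈ pieces, ∀ e ∈ listArcs p, e ∈ allowedArcs T σ a b
  arc_disj : ∀ i j : ℕ, i < j → j < pieces.length →
    ∀ e ∈ listArcs (pieces.getD i []), e ∉ listArcs (pieces.getD j [])
  first_cond : ∀ i : ℕ, 0 < i → i < pieces.length →
    ∀ e, firstArc (pieces.getD i []) = some e → e ∈ gMinus T σ a b ∪ dMinus T σ a b
  last_cond : ∀ i : ℕ, i + 1 < pieces.length →
    ∀ e, lastArc (pieces.getD i []) = some e → e ∈ gPlus T σ a b ∪ dPlus T σ a b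

/-- The set of arcs of all pieces of a scattered path. -/
def ScatPath.arcSet {T : Digr V} {σ : V → ℕ} {a b : ℕ} (P : ScatPath T σ a b) :
    Set (V × V) :=
  {e | ∃ p ∈ P.pieces, e ∈ listArcs p}

/-- The beginning `First(P)` of a scattered path, if defined. -/
noncomputable def ScatPath.First {T : Digr V} {σ : V → ℕ} {a b : ℕ}
    (P : ScatPath T σ a b) : Option V :=
  match P.pieces.head? with
  | none => none
  | some p =>
    match firstArc p with
    | none => none
    | some e =>
      if e ∈ (T.induce (interval σ a b)).arcs ∪ gPlus T σ a b ∪ dPlus T σ a b then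
        some e.1 else none

/-- The end `Last(P)` of a scattered path, if defined. -/
noncomputable def ScatPath.Last {T : Digr V} {σ : V → ℕ} {a b : ℕ}
    (P : ScatPath T σ a b) : Option V :=
  match P.pieces.getLast? with
  | none => none
  | some p =>
    match lastArc p with
    | none => none
    | some e =>
      if e ∈ (T.induce (interval σ a b)).arcs ∪ gMinus T σ a b ∪ dMinus T σ a b then
        some e.2 else none

/-- `P'` is a shortening of `P`. -/
def ScatShortening {T : Digr V} {σ : V → ℕ} {a b : ℕ}
    (P' P : ScatPath T σ a b) : Prop :=
  P'.First = P.First ∧ P'.Last = P.Last ∧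
  ∃ f g : ℕ → ℕ,
    (∀ s : ℕ, s < P'.pieces.length →
      f s ≤ g s ∧ g s < P.pieces.length ∧
      (firstArc (P'.pieces.getD s [])).map Prod.fst
        = (firstArc (P.pieces.getD (f s) [])).map Prod.fst ∧
      (lastArc (P'.pieces.getD s [])).map Prod.snd
        = (lastArc (P.pieces.getD (g s) [])).map Prod.snd) ∧
    ∀ s s' : ℕ, s < s' → s' < P'.pieces.length → g s < f s'

variable {VH : Type}

/-- A partial immersion of `H` in the σ-interval `σ(a,b]`. -/
structure PartialImm (H : Digr VH) (T : Digr V) (σ : V → ℕ) (a b : ℕ) where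
  sp : ∀ e : VH × VH, H.Adj e.1 e.2 → ScatPath T σ a b
  arc_disj : ∀ (e : VH × VH) (he : H.Adj e.1 e.2) (e' : VH × VH) (he' : H.Adj e'.1 e'.2),
    e ≠ e' → ∀ x ∈ (sp e he).arcSet, x ∉ (sp e' he').arcSet
  first_eq : ∀ (e : VH × VH) (he : H.Adj e.1 e.2) (e' : VH × VH) (he' : H.Adj e'.1 e'.2),
    e.1 = e'.1 → (sp e he).First = (sp e' he').First
  first_inj : ∀ (e : VH × VH) (he : H.Adj e.1 e.2) (e' : VH × VH) (he' : H.Adj e'.1 e'.2)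
    (v : V), (sp e he).First = some v → (sp e' he').First = some v → e.1 = e'.1
  last_eq : ∀ (e : VH × VH) (he : H.Adj e.1 e.2) (e' : VH × VH) (he' : H.Adj e'.1 e'.2),
    e.2 = e'.2 → (sp e he).Last = (sp e' he').Last
  last_inj : ∀ (e : VH × VH) (he : H.Adj e.1 e.2) (e' : VH × VH) (he' : H.Adj e'.1 e'.2)
    (v : V), (sp e he).Last = some v → (sp e' he').Last = some v → e.2 = e'.2

/-- `φ'` is a shortening of the partial immersion `φ`. -/
def PartialImm.IsShortening {H : Digr VH} {T : Digr V} {σ : V → ℕ} {a b : ℕ}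
    (φ' φ : PartialImm H T σ a b) : Prop :=
  ∀ e he, ScatShortening (φ'.sp e he) (φ.sp e he)

/-- `φ` is minimal: no shortening of `φ` has a scattered path of strictly smaller size. -/
def PartialImm.Minimal {H : Digr VH} {T : Digr V} {σ : V → ℕ} {a b : ℕ}
    (φ : PartialImm H T σ a b) : Prop :=
  ∀ φ' : PartialImm H T σ a b, φ'.IsShortening φ →
    ∀ e he, ((φ.sp e he).pieces).length ≤ ((φ'.sp e he).pieces).length

/-- Whether an arc is incident with the interval `σ(a',b']`. -/
def touches (σ : V → ℕ) (a' b' : ℕ) (e : V × V) : Bool :=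
  decide ((a' < σ e.1 ∧ σ e.1 ≤ b') ∨ (a' < σ e.2 ∧ σ e.2 ≤ b'))

/-- Maximal runs of consecutive elements of a list satisfying a predicate. -/
def runs {γ : Type} (p : γ → Bool) : List γ → List (List γ)
  | [] => []
  | [x] => if p x then [[x]] else []
  | x :: y :: l =>
    let rest := runs p (y :: l)
    if p x then
      if p y then
        match rest with
        | [] => [[x]]
        | r :: rs => (x :: r) :: rs
      else [x] :: rest
    else rest

/-- Vertex list of a run of consecutive arcs. -/
def arcRunToVerts : List (V × V) → List V
  | [] => []
  | e :: r => e.1 :: e.2 :: r.map Prod.snd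

/-- The trace of a single piece on the interval `σ(a',b']`: the maximal runs of its
arcs incident with the interval, as vertex lists. -/
def tracePiece (σ : V → ℕ) (a' b' : ℕ) (p : List V) : List (List V) :=
  (runs (touches σ a' b') (listArcs p)).map arcRunToVerts

/-- The trace of a scattered path on the interval `σ(a',b']`, as a list of pieces. -/
def traceScat {T : Digr V} {σ : V → ℕ} {a b : ℕ} (P : ScatPath T σ a b)
    (a' b' : ℕ) : List (List V) :=
  (P.pieces.map (tracePiece σ a' b')).flatten

/-- `ψ` is the trace `φ|_J` of `φ` on `J = σ(a',b']` (piecewise, as data). -/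
def PartialImm.IsTraceOf {H : Digr VH} {T : Digr V} {σ : V → ℕ} {a b a' b' : ℕ}
    (ψ : PartialImm H T σ a' b') (φ : PartialImm H T σ a b) : Prop :=
  ∀ e he, (ψ.sp e he).pieces = traceScat (φ.sp e he) a' b'

/-- `P` is a gluing of `P₁` (in `σ(a,g]`) and `P₂` (in `σ(g,b]`). -/
def ScatGluing {T : Digr V} {σ : V → ℕ} (a g b : ℕ)
    (P : ScatPath T σ a b) (P₁ : ScatPath T σ a g) (P₂ : ScatPath T σ g b) : Prop :=
  P₁.pieces = traceScat P a g ∧ P₂.pieces = traceScat P g b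

/-- Scattered paths in consecutive intervals are compatible if they admit a gluing. -/
def ScatCompatible {T : Digr V} {σ : V → ℕ} (a g b : ℕ)
    (P₁ : ScatPath T σ a g) (P₂ : ScatPath T σ g b) : Prop :=
  ∃ P : ScatPath T σ a b, ScatGluing a g b P P₁ P₂


section RunsLemmas
variable {γ : Type} (p : γ → Bool)

theorem runs_nil : runs p ([] : List γ) = [] := rfl
theorem runs_single (x : γ) :
    runs p [x] = if p x then [[x]] else [] := rfl
theorem runs_cons₂ (x y : γ) (l : List γ) :
    runs p (x :: y :: l) =
      if p x then
        if p y then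
          match runs p (y :: l) with
          | [] => [[x]]
          | r :: rs => (x :: r) :: rs
        else [x] :: runs p (y :: l)
      else runs p (y :: l) := rfl


theorem runs_pos_head : ∀ (t : List γ) (x : γ), p x = true →
    ∃ r rs, runs p (x :: t) = r :: rs ∧ r.head? = some x ∧ r <+: (x :: t)
  | [], x, hx => ⟨[x], [], by simp [runs_single, hx], rfl, List.prefix_refl _⟩
  | (u :: t'), x, hx => by
    by_cases hu : p u = true
    · obtain ⟨r, rs, hr, hh, hp⟩ := runs_pos_head t' u hu
      refine ⟨x :: r, rs, by simp [runs_cons₂, hx, hu, hr], by simp, ?_⟩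
      exact (List.cons_prefix_cons).2 ⟨rfl, hp⟩
    · exact ⟨[x], runs p (u :: t'), by simp [runs_cons₂, hx, hu],
        rfl, (List.cons_prefix_cons).2 ⟨rfl, List.nil_prefix⟩⟩

theorem runs_mem : ∀ (l : List γ), ∀ r ∈ runs p l, r ≠ [] ∧ ∀ z ∈ r, p z = true
  | [] => by simp [runs_nil]
  | [x] => by
    by_cases hx : p x = true <;> simp_all [runs_single, hx]
  | (x :: u :: t) => by
    intro r hr
    by_cases hx : p x = true
    · by_cases hu : p u = true
      · obtain ⟨r0, rs, heq, hh, _⟩ := runs_pos_head p t u hu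
        rw [runs_cons₂, if_pos hx, if_pos hu, heq] at hr
        rcases List.mem_cons.1 hr with h | h
        · subst h
          have h0 := runs_mem (u :: t) r0 (heq ▸ List.mem_cons_self)
          refine ⟨by simp, ?_⟩
          intro z hz
          rcases List.mem_cons.1 hz with h | h
          · subst h; exact hx
          · exact h0.2 z h
        · exact runs_mem (u :: t) r (heq ▸ List.mem_cons_of_mem _ h)
      · rw [runs_cons₂, if_pos hx, if_neg hu] at hr
        rcases List.mem_cons.1 hr with h | h
        · subst h; exact ⟨by simp, by simp [hx]⟩
        · exact runs_mem (u :: t) r h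
    · rw [runs_cons₂, if_neg hx] at hr
      exact runs_mem (u :: t) r hr

theorem runs_infix : ∀ (l : List γ), ∀ r ∈ runs p l, r <:+: l
  | [] => by simp [runs_nil]
  | [x] => by
    by_cases hx : p x = true <;> simp_all [runs_single, hx]
  | (x :: u :: t) => by
    intro r hr
    by_cases hx : p x = true
    · by_cases hu : p u = true
      · obtain ⟨r0, rs, heq, hh, hp⟩ := runs_pos_head p t u hu
        rw [runs_cons₂, if_pos hx, if_pos hu, heq] at hr
        rcases List.mem_cons.1 hr with h | h
        · subst h
          exact ((List.cons_prefix_cons).2 ⟨rfl, hp⟩).isInfix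
        · exact ((runs_infix (u :: t) r (heq ▸ List.mem_cons_of_mem _ h)).trans
            (List.suffix_cons x (u :: t)).isInfix)
      · rw [runs_cons₂, if_pos hx, if_neg hu] at hr
        rcases List.mem_cons.1 hr with h | h
        · subst h; exact ((List.cons_prefix_cons).2 ⟨rfl, List.nil_prefix⟩).isInfix
        · exact (runs_infix (u :: t) r h).trans (List.suffix_cons x (u :: t)).isInfix
    · rw [runs_cons₂, if_neg hx] at hr
      exact (runs_infix (u :: t) r hr).trans (List.suffix_cons x (u :: t)).isInfix

theorem runs_flatten_sublist : ∀ (l : List γ), (runs p l).flatten.Sublist l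
  | [] => by simp [runs_nil]
  | [x] => by by_cases hx : p x = true <;> simp [runs_single, hx]
  | (x :: u :: t) => by
    by_cases hx : p x = true
    · by_cases hu : p u = true
      · obtain ⟨r0, rs, heq, hh, hp⟩ := runs_pos_head p t u hu
        rw [runs_cons₂, if_pos hx, if_pos hu, heq]
        have := runs_flatten_sublist (u :: t)
        rw [heq] at this
        simpa using this.cons_cons x
      · rw [runs_cons₂, if_pos hx, if_neg hu]
        simpa using (runs_flatten_sublist (u :: t)).cons_cons x
    · rw [runs_cons₂, if_neg hx]
      exact (runs_flatten_sublist (u :: t)).trans (List.sublist_cons_self x _)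

end RunsLemmas
theorem runs_pos_last : ∀ (l : List γ) (x : γ), p x = true → l.getLast? = some x →
    ∃ rs r, runs p l = rs ++ [r] ∧ r.getLast? = some x
  | [], x, hx, hl => by simp at hl
  | [z], x, hx, hl => by
    obtain rfl : z = x := by simpa using hl
    exact ⟨[], [z], by simp [runs_single, hx], rfl⟩
  | (z :: w :: t), x, hx, hl => by
    rw [List.getLast?_cons_cons] at hl
    obtain ⟨rs, r, heq, hlast⟩ := runs_pos_last (w :: t) x hx hl
    by_cases hz : p z = true
    · by_cases hw : p w = true
      · obtain ⟨r0, rs0, heq0, hh0, _⟩ := runs_pos_head p t w hw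
        rw [runs_cons₂, if_pos hz, if_pos hw, heq0]
        rw [heq0] at heq
        rcases rs with _ | ⟨r1, rs'⟩
        · simp only [List.nil_append, List.cons.injEq] at heq
          obtain ⟨h1, h2⟩ := heq
          subst h1; subst h2
          rcases r0 with _ | ⟨c, r0'⟩
          · simp at hh0
          · exact ⟨[], z :: c :: r0', by simp, by rw [List.getLast?_cons_cons]; exact hlast⟩
        · simp only [List.cons_append, List.cons.injEq] at heq
          obtain ⟨h1, h2⟩ := heq
          subst h1
          exact ⟨(z :: r0) :: rs', r, by rw [h2]; simp, hlast⟩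
      · rw [runs_cons₂, if_pos hz, if_neg hw, heq]
        exact ⟨[z] :: rs, r, by simp, hlast⟩
    · rw [runs_cons₂, if_neg hz]
      exact ⟨rs, r, heq, hlast⟩

theorem runs_head_spec : ∀ (l : List γ) (j : ℕ) (x : γ),
    (((runs p l).getD j []).head? = some x) →
    (j = 0 ∧ l.head? = some x) ∨ ∃ y, p y = false ∧ [y, x] <:+: l
  | [], j, x, h => by rw [runs_nil] at h; simp at h
  | [z], j, x, h => by
    by_cases hz : p z = true
    · rw [runs_single, if_pos hz] at h
      rcases j with _ | j
      · simp only [List.getD_cons_zero, List.head?_cons, Option.some.injEq] at h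
        exact Or.inl ⟨rfl, by rw [← h]; rfl⟩
      · simp at h
    · rw [runs_single, if_neg hz] at h; simp at h
  | (z :: w :: t), j, x, h => by
    by_cases hz : p z = true
    · by_cases hw : p w = true
      · obtain ⟨r0, rs0, heq0, hh0, _⟩ := runs_pos_head p t w hw
        rw [runs_cons₂, if_pos hz, if_pos hw, heq0] at h
        rcases j with _ | j
        · simp only [List.getD_cons_zero, List.head?_cons, Option.some.injEq] at h
          exact Or.inl ⟨rfl, by rw [← h]; rfl⟩
        · simp only [List.getD_cons_succ] at h
          have := runs_head_spec (w :: t) (j + 1) x (by rw [heq0]; simpa using h)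
          rcases this with ⟨h1, _⟩ | ⟨y, hy1, hy2⟩
          · omega
          · exact Or.inr ⟨y, hy1, hy2.trans (List.suffix_cons z (w :: t)).isInfix⟩
      · rw [runs_cons₂, if_pos hz, if_neg hw] at h
        rcases j with _ | j
        · simp only [List.getD_cons_zero, List.head?_cons, Option.some.injEq] at h
          exact Or.inl ⟨rfl, by rw [← h]; rfl⟩
        · simp only [List.getD_cons_succ] at h
          have := runs_head_spec (w :: t) j x h
          rcases this with ⟨h1, h2⟩ | ⟨y, hy1, hy2⟩
          · exfalso
            have hxw : w = x := by simpa using h2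
            subst h1
            rcases hrr : runs p (w :: t) with _ | ⟨r0, rs0⟩
            · rw [hrr] at h; simp at h
            · rw [hrr] at h
              simp only [List.getD_cons_zero] at h
              have hx' : x ∈ r0 := List.mem_of_mem_head? (by rw [h]; rfl)
              have hpx := (runs_mem p (w :: t) r0
                (by rw [hrr]; exact List.mem_cons_self)).2 x hx'
              rw [← hxw] at hpx
              exact hw hpx
          · exact Or.inr ⟨y, hy1, hy2.trans (List.suffix_cons z (w :: t)).isInfix⟩
    · rw [runs_cons₂, if_neg hz] at h
      have := runs_head_spec (w :: t) j x h
      rcases this with ⟨h1, h2⟩ | ⟨y, hy1, hy2⟩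
      · refine Or.inr ⟨z, by simpa using hz, ?_⟩
        have hxw : w = x := by simpa using h2
        rw [← hxw]
        exact ⟨[], t, rfl⟩
      · exact Or.inr ⟨y, hy1, hy2.trans (List.suffix_cons z (w :: t)).isInfix⟩
theorem runs_last_spec : ∀ (l : List γ) (j : ℕ) (x : γ),
    (((runs p l).getD j []).getLast? = some x) →
    (j = (runs p l).length - 1 ∧ l.getLast? = some x) ∨
      ∃ y, p y = false ∧ [x, y] <:+: l
  | [], j, x, h => by rw [runs_nil] at h; simp at h
  | [z], j, x, h => by
    by_cases hz : p z = true
    · rw [runs_single, if_pos hz] at h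
      rcases j with _ | j
      · simp only [List.getD_cons_zero] at h
        obtain rfl : z = x := by simpa using h
        exact Or.inl ⟨by rw [runs_single, if_pos hz]; rfl, rfl⟩
      · simp at h
    · rw [runs_single, if_neg hz] at h; simp at h
  | (z :: w :: t), j, x, h => by
    by_cases hz : p z = true
    · by_cases hw : p w = true
      · obtain ⟨r0, rs0, heq0, hh0, _⟩ := runs_pos_head p t w hw
        rw [runs_cons₂, if_pos hz, if_pos hw, heq0] at h ⊢
        rcases j with _ | j
        · -- run is z :: r0, its last equals last of r0 (r0 ≠ [])
          simp only [List.getD_cons_zero] at h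
          rcases r0 with _ | ⟨c, r0'⟩
          · simp at hh0
          · rw [List.getLast?_cons_cons] at h
            have := runs_last_spec (w :: t) 0 x (by rw [heq0]; simpa using h)
            rcases this with ⟨h1, h2⟩ | ⟨y, hy1, hy2⟩
            · rw [heq0] at h1
              refine Or.inl ⟨by simpa using h1, by rw [List.getLast?_cons_cons]; exact h2⟩
            · exact Or.inr ⟨y, hy1, hy2.trans (List.suffix_cons z (w :: t)).isInfix⟩
        · simp only [List.getD_cons_succ] at h
          have := runs_last_spec (w :: t) (j + 1) x (by rw [heq0]; simpa using h)
          rcases this with ⟨h1, h2⟩ | ⟨y, hy1, hy2⟩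
          · rw [heq0] at h1
            refine Or.inl ⟨by simpa using h1, by rw [List.getLast?_cons_cons]; exact h2⟩
          · exact Or.inr ⟨y, hy1, hy2.trans (List.suffix_cons z (w :: t)).isInfix⟩
      · rw [runs_cons₂, if_pos hz, if_neg hw] at h ⊢
        rcases j with _ | j
        · simp only [List.getD_cons_zero] at h
          obtain rfl : z = x := by simpa using h
          refine Or.inr ⟨w, by simpa using hw, ⟨[], t, rfl⟩⟩
        · simp only [List.getD_cons_succ] at h
          have := runs_last_spec (w :: t) j x h
          rcases this with ⟨h1, h2⟩ | ⟨y, hy1, hy2⟩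
          · have hlen : runs p (w :: t) ≠ [] := by
              intro hnil; rw [hnil] at h; simp at h
            refine Or.inl ⟨?_, by rw [List.getLast?_cons_cons]; exact h2⟩
            have : 0 < (runs p (w :: t)).length := List.length_pos_iff.2 hlen
            simp only [List.length_cons]
            omega
          · exact Or.inr ⟨y, hy1, hy2.trans (List.suffix_cons z (w :: t)).isInfix⟩
    · rw [runs_cons₂, if_neg hz] at h ⊢
      have := runs_last_spec (w :: t) j x h
      rcases this with ⟨h1, h2⟩ | ⟨y, hy1, hy2⟩
      · exact Or.inl ⟨h1, by rw [List.getLast?_cons_cons]; exact h2⟩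
      · exact Or.inr ⟨y, hy1, hy2.trans (List.suffix_cons z (w :: t)).isInfix⟩

section ListArcsLemmas
variable {V : Type}

theorem listArcs_nil : listArcs ([] : List V) = [] := rfl
theorem listArcs_single (x : V) : listArcs [x] = [] := rfl
theorem listArcs_cons₂ (x y : V) (l : List V) :
    listArcs (x :: y :: l) = (x, y) :: listArcs (y :: l) := rfl

theorem listArcs_chain'_comp : ∀ (q : List V),
    (listArcs q).Chain' (fun e f => e.2 = f.1)
  | [] => by simp [listArcs_nil, List.Chain']
  | [x] => by simp [listArcs_single, List.Chain']
  | (x :: y :: l) => by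
    rw [listArcs_cons₂]
    rcases l with _ | ⟨z, l'⟩
    · simp [listArcs_single, List.Chain']
    · rw [listArcs_cons₂]
      exact List.IsChain.cons_cons rfl (by
        have := listArcs_chain'_comp (y :: z :: l')
        rwa [listArcs_cons₂] at this)

theorem listArcs_chain_iff {R : V → V → Prop} : ∀ (q : List V),
    q.Chain' R ↔ ∀ e ∈ listArcs q, R e.1 e.2
  | [] => by simp [listArcs_nil, List.Chain']
  | [x] => by simp [listArcs_single, List.Chain']
  | (x :: y :: l) => by
    rw [listArcs_cons₂]; simp only [List.Chain', List.isChain_cons_cons]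
    constructor
    · rintro ⟨h1, h2⟩ e he
      rcases List.mem_cons.1 he with h | h
      · subst h; exact h1
      · exact (listArcs_chain_iff (y :: l)).1 h2 e h
    · intro h
      exact ⟨h (x, y) (List.mem_cons_self),
        (listArcs_chain_iff (y :: l)).2 fun e he => h e (List.mem_cons_of_mem _ he)⟩

theorem listArcs_map_fst_sublist : ∀ (q : List V),
    ((listArcs q).map Prod.fst).Sublist q
  | [] => by simp [listArcs_nil]
  | [x] => by simp [listArcs_single]
  | (x :: y :: l) => by
    rw [listArcs_cons₂]
    simpa using (listArcs_map_fst_sublist (y :: l)).cons_cons x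

theorem listArcs_nodup {q : List V} (h : q.Nodup) : (listArcs q).Nodup := by
  have h1 : ((listArcs q).map Prod.fst).Nodup :=
    (listArcs_map_fst_sublist q).nodup h
  exact h1.of_map

theorem arcRunToVerts_nil : arcRunToVerts ([] : List (V × V)) = [] := rfl
theorem arcRunToVerts_cons (e : V × V) (r : List (V × V)) :
    arcRunToVerts (e :: r) = e.1 :: e.2 :: r.map Prod.snd := rfl

theorem arcRunToVerts_two_le {r : List (V × V)} (h : r ≠ []) :
    2 ≤ (arcRunToVerts r).length := by
  rcases r with _ | ⟨e, r'⟩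
  · simp at h
  · rw [arcRunToVerts_cons]; simp

theorem listArcs_arcRunToVerts : ∀ (r : List (V × V)),
    r.Chain' (fun e f => e.2 = f.1) → listArcs (arcRunToVerts r) = r
  | [], _ => rfl
  | [e], _ => by
    simp [arcRunToVerts_cons, listArcs_cons₂, listArcs_single]
  | (e :: f :: r'), hc => by
    simp only [List.Chain', List.isChain_cons_cons] at hc
    have ih := listArcs_arcRunToVerts (f :: r') hc.2
    have h2 : arcRunToVerts (e :: f :: r') = e.1 :: arcRunToVerts (f :: r') := by
      rw [arcRunToVerts_cons, arcRunToVerts_cons, hc.1]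
      simp
    have h3 : arcRunToVerts (f :: r') = f.1 :: f.2 :: r'.map Prod.snd := rfl
    rw [h2, h3, listArcs_cons₂, ← h3, ih, ← hc.1]

theorem firstArc_arcRunToVerts : ∀ (r : List (V × V)),
    firstArc (arcRunToVerts r) = r.head?
  | [] => rfl
  | (e :: r') => by
    rw [arcRunToVerts_cons, firstArc, listArcs_cons₂]
    simp

theorem lastArc_arcRunToVerts (r : List (V × V))
    (hc : r.Chain' (fun e f => e.2 = f.1)) :
    lastArc (arcRunToVerts r) = r.getLast? := by
  rw [lastArc, listArcs_arcRunToVerts r hc]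

theorem arcRunToVerts_prefix_aux : ∀ (q : List V) (r : List (V × V)) (x : V),
    r <+: listArcs q → q.head? = some x → (x :: r.map Prod.snd) <+: q
  | [], r, x, hpre, hh => by simp at hh
  | (z :: q'), [], x, hpre, hh => by
    obtain rfl : z = x := by simpa using hh
    simp
  | (z :: q'), (e :: r'), x, hpre, hh => by
    obtain rfl : z = x := by simpa using hh
    rcases q' with _ | ⟨y, q''⟩
    · rw [listArcs_single] at hpre
      exact absurd hpre.length_le (by simp)
    · rw [listArcs_cons₂] at hpre
      rw [List.cons_prefix_cons] at hpre
      obtain ⟨rfl, hpre'⟩ := hpre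
      have ih := arcRunToVerts_prefix_aux (y :: q'') r' y hpre' rfl
      simp only [List.map_cons]
      exact (List.cons_prefix_cons).2 ⟨rfl, ih⟩

theorem arcRunToVerts_infix : ∀ (q : List V) (r : List (V × V)), r ≠ [] →
    r <:+: listArcs q → (arcRunToVerts r) <:+: q
  | [], r, hne, hinf => by
    rw [listArcs_nil] at hinf
    exact absurd (List.eq_nil_of_infix_nil hinf) hne
  | [z], r, hne, hinf => by
    rw [listArcs_single] at hinf
    exact absurd (List.eq_nil_of_infix_nil hinf) hne
  | (z :: y :: q''), r, hne, hinf => by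
    rw [listArcs_cons₂] at hinf
    rcases List.infix_cons_iff.1 hinf with hpre | hinf'
    · rcases r with _ | ⟨e, r'⟩
      · simp at hne
      · rw [List.cons_prefix_cons] at hpre
        obtain ⟨rfl, hpre'⟩ := hpre
        have := arcRunToVerts_prefix_aux (y :: q'') r' y hpre' rfl
        rw [arcRunToVerts_cons]
        exact ((List.cons_prefix_cons).2 ⟨rfl, this⟩).isInfix
    · exact (arcRunToVerts_infix (y :: q'') r hne hinf').trans
        (List.suffix_cons z (y :: q'')).isInfix

end ListArcsLemmas

section FlattenLemmas
variable {α : Type}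

theorem flatten_getD_spec (d : α) : ∀ (L : List (List α)) (i : ℕ),
    i < L.flatten.length →
    ∃ k j, k < L.length ∧ j < (L.getD k []).length ∧
      L.flatten.getD i d = (L.getD k []).getD j d ∧
      (0 < i → 0 < j ∨ 0 < k) ∧
      (i + 1 < L.flatten.length → j + 1 < (L.getD k []).length ∨ k + 1 < L.length)
  | [], i, h => absurd h (by simp)
  | (l :: L'), i, h => by
    have hflat : (l :: L').flatten = l ++ L'.flatten := rfl
    by_cases hi : i < l.length
    · refine ⟨0, i, by simp, by simpa using hi, ?_, fun h0 => Or.inl h0, ?_⟩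
      · rw [hflat, List.getD_append _ _ _ _ hi]
        simp
      · intro h1
        by_cases h2 : i + 1 < l.length
        · exact Or.inl (by simpa using h2)
        · refine Or.inr ?_
          rw [hflat, List.length_append] at h1
          have : L'.flatten.length ≠ 0 := by omega
          have : L' ≠ [] := by
            intro hL; rw [hL] at this; simp at this
          simp only [List.length_cons]
          have := List.length_pos_iff.2 this
          omega
    · push_neg at hi
      rw [hflat, List.length_append] at h
      obtain ⟨k, j, hk, hj, hval, hfst, hlst⟩ :=
        flatten_getD_spec d L' (i - l.length) (by omega)
      refine ⟨k + 1, j, by simpa using hk, by simpa using hj, ?_, fun _ => Or.inr (by omega), ?_⟩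
      · rw [hflat, List.getD_append_right _ _ _ _ hi]
        simpa using hval
      · intro h1
        rw [hflat, List.length_append] at h1
        rcases hlst (by omega) with h' | h'
        · exact Or.inl (by simpa using h')
        · exact Or.inr (by simp; omega)

theorem flatten_head_spec : ∀ (L : List (List α)) (x : α),
    L.flatten.head? = some x →
    ∃ k, k < L.length ∧ (L.getD k []).head? = some x ∧
      ∀ k', k' < k → L.getD k' [] = []
  | [], x, h => by simp at h
  | (l :: L'), x, h => by
    have hflat : (l :: L').flatten = l ++ L'.flatten := rfl
    rw [hflat, List.head?_append] at h
    rcases hl : l.head? with _ | y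
    · rw [hl, Option.none_or] at h
      obtain ⟨k, hk, hh, hprev⟩ := flatten_head_spec L' x h
      have hlnil : l = [] := by
        rcases l with _ | _
        · rfl
        · simp at hl
      refine ⟨k + 1, by simpa using hk, by simpa using hh, ?_⟩
      intro k' hk'
      rcases k' with _ | k''
      · simpa using hlnil
      · simpa using hprev k'' (by omega)
    · rw [hl] at h
      have h' : some y = some x := h
      obtain rfl : y = x := by simpa using h'
      exact ⟨0, by simp, by simpa using hl, fun k' hk' => by omega⟩

theorem flatten_getLast_spec : ∀ (L : List (List α)) (x : α),
    L.flatten.getLast? = some x →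
    ∃ k, k < L.length ∧ (L.getD k []).getLast? = some x ∧
      ∀ k', k < k' → L.getD k' [] = []
  | [], x, h => by simp at h
  | (l :: L'), x, h => by
    have hflat : (l :: L').flatten = l ++ L'.flatten := rfl
    rw [hflat, List.getLast?_append] at h
    rcases hl : L'.flatten.getLast? with _ | y
    · rw [hl, Option.none_or] at h
      have hnil : ∀ l' ∈ L', l' = [] :=
        List.flatten_eq_nil_iff.1 (List.getLast?_eq_none_iff.1 hl)
      refine ⟨0, by simp, by simpa using h, ?_⟩
      intro k' hk'
      rcases k' with _ | k''
      · omega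
      · simp only [List.getD_cons_succ]
        by_cases hk'' : k'' < L'.length
        · rw [List.getD_eq_getElem _ _ hk'']
          exact hnil _ (List.getElem_mem hk'')
        · exact List.getD_eq_default _ _ (by omega)
    · rw [hl] at h
      have h' : some y = some x := h
      obtain rfl : y = x := by simpa using h'
      obtain ⟨k, hk, hh, hnext⟩ := flatten_getLast_spec L' y hl
      refine ⟨k + 1, by simpa using hk, by simpa using hh, ?_⟩
      intro k' hk'
      rcases k' with _ | k''
      · omega
      · simpa using hnext k'' (by omega)

end FlattenLemmas

set_option linter.unusedSectionVars false
section IntervalHelpers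
variable {T : Digr V} {σ : V → ℕ} {a b a' b' : ℕ}

theorem sigma_ge_one (hσ : IsOrdering σ) (v : V) : 1 ≤ σ v :=
  (Set.mem_Icc.1 (hσ.mapsTo (Set.mem_univ v))).1

theorem sigma_le_card (hσ : IsOrdering σ) (v : V) : σ v ≤ Fintype.card V :=
  (Set.mem_Icc.1 (hσ.mapsTo (Set.mem_univ v))).2

theorem mem_interval_iff {v : V} {c d : ℕ} : v ∈ interval σ c d ↔ c < σ v ∧ σ v ≤ d :=
  Iff.rfl

theorem touches_iff {e : V × V} :
    touches σ a' b' e = true ↔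
      e.1 ∈ interval σ a' b' ∨ e.2 ∈ interval σ a' b' := by
  simp [touches, mem_interval_iff]

theorem touches_false {e : V × V} (h : touches σ a' b' e = false) :
    e.1 ∉ interval σ a' b' ∧ e.2 ∉ interval σ a' b' := by
  constructor <;> intro hc <;>
    · rw [← Bool.not_eq_true, touches_iff] at h
      exact h (by tauto)

theorem mem_firstSet_iff (hσ : IsOrdering σ) (hbb : b ≤ Fintype.card V)
    {e : V × V} (hA : T.Adj e.1 e.2) :
    e ∈ (T.induce (interval σ a b)).arcs ∪ gPlus T σ a b ∪ dPlus T σ a b ↔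
      e.1 ∈ interval σ a b := by
  constructor
  · rintro ((h | h) | h)
    · exact h.1
    · exact h.2.1
    · exact h.2.1
  · intro h1
    rcases Nat.lt_or_ge a (σ e.2) with h2 | h2
    · rcases le_or_gt (σ e.2) b with h3 | h3
      · exact Or.inl (Or.inl ⟨h1, ⟨h2, h3⟩, hA⟩)
      · exact Or.inl (Or.inr ⟨hA, h1, h3, sigma_le_card hσ e.2⟩)
    · exact Or.inr ⟨hA, h1, ⟨by have := sigma_ge_one hσ e.2; omega, h2⟩⟩

theorem mem_lastSet_iff (hσ : IsOrdering σ) (hbb : b ≤ Fintype.card V)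
    {e : V × V} (hA : T.Adj e.1 e.2) :
    e ∈ (T.induce (interval σ a b)).arcs ∪ gMinus T σ a b ∪ dMinus T σ a b ↔
      e.2 ∈ interval σ a b := by
  constructor
  · rintro ((h | h) | h)
    · exact h.2.1
    · exact h.2.2
    · exact h.2.2
  · intro h2
    rcases le_or_gt (σ e.1) a with h3 | h3
    · exact Or.inl (Or.inr ⟨hA, ⟨by have := sigma_ge_one hσ e.1; omega, h3⟩, h2⟩)
    · rcases le_or_gt (σ e.1) b with h4 | h4
      · exact Or.inl (Or.inl ⟨⟨h3, h4⟩, h2, hA⟩)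
      · exact Or.inr ⟨hA, ⟨h4, sigma_le_card hσ e.1⟩, h2⟩

theorem mem_gdMinus (hσ : IsOrdering σ) {e : V × V} (hA : T.Adj e.1 e.2)
    (h1 : e.1 ∉ interval σ a' b') (h2 : e.2 ∈ interval σ a' b') :
    e ∈ gMinus T σ a' b' ∪ dMinus T σ a' b' := by
  rcases le_or_gt (σ e.1) a' with h3 | h3
  · exact Or.inl ⟨hA, ⟨by have := sigma_ge_one hσ e.1; omega, h3⟩, h2⟩
  · have h4 : b' < σ e.1 := by
      by_contra h4
      exact h1 ⟨h3, by omega⟩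
    exact Or.inr ⟨hA, ⟨h4, sigma_le_card hσ e.1⟩, h2⟩

theorem mem_gdPlus (hσ : IsOrdering σ) {e : V × V} (hA : T.Adj e.1 e.2)
    (h1 : e.1 ∈ interval σ a' b') (h2 : e.2 ∉ interval σ a' b') :
    e ∈ gPlus T σ a' b' ∪ dPlus T σ a' b' := by
  rcases le_or_gt (σ e.2) a' with h3 | h3
  · exact Or.inr ⟨hA, h1, ⟨by have := sigma_ge_one hσ e.2; omega, h3⟩⟩
  · have h4 : b' < σ e.2 := by
      by_contra h4
      exact h2 ⟨h3, by omega⟩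
    exact Or.inl ⟨hA, h1, ⟨h4, sigma_le_card hσ e.2⟩⟩

theorem mem_allowed_of_touch (hσ : IsOrdering σ) {e : V × V} (hA : T.Adj e.1 e.2)
    (ht : e.1 ∈ interval σ a' b' ∨ e.2 ∈ interval σ a' b') :
    e ∈ allowedArcs T σ a' b' := by
  rcases ht with h | h
  · by_cases h2 : e.2 ∈ interval σ a' b'
    · exact Or.inl (Or.inl (Or.inl (Or.inl ⟨h, h2, hA⟩)))
    · rcases mem_gdPlus hσ hA h h2 with h' | h'
      · exact Or.inl (Or.inr h')
      · exact Or.inl (Or.inl (Or.inl (Or.inr h')))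
  · by_cases h1 : e.1 ∈ interval σ a' b'
    · exact Or.inl (Or.inl (Or.inl (Or.inl ⟨h1, h, hA⟩)))
    · rcases mem_gdMinus hσ hA h1 h with h' | h'
      · exact Or.inr h'
      · exact Or.inl (Or.inl (Or.inr h'))

theorem notmem_interval_of_outer {v : V} (h₁ : a ≤ a') (h₃ : b' ≤ b)
    (h : σ v ≤ a ∨ b < σ v) : v ∉ interval σ a' b' := by
  intro hc
  rcases hc with ⟨hc1, hc2⟩
  omega

end IntervalHelpers

section TraceConstruction
variable {T : Digr V} {σ : V → ℕ} {a b a' b' : ℕ}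

theorem getD_map_getD {α β : Type} (f : α → β) (l : List α) (dα : α) (dβ : β)
    (k : ℕ) (hk : k < l.length) : (l.map f).getD k dβ = f (l.getD k dα) := by
  rw [List.getD_eq_getElem _ _ (by simpa using hk), List.getElem_map,
    List.getD_eq_getElem _ _ hk]

theorem getD_mem {α : Type} (l : List α) (d : α) (k : ℕ) (hk : k < l.length) :
    l.getD k d ∈ l := by
  rw [List.getD_eq_getElem _ _ hk]
  exact List.getElem_mem hk

theorem mem_traceScat {P : ScatPath T σ a b} {ρ : List V}
    (h : ρ ∈ traceScat P a' b') :
    ∃ p ∈ P.pieces, ∃ r ∈ runs (touches σ a' b') (listArcs p),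
      ρ = arcRunToVerts r := by
  rw [traceScat, List.mem_flatten] at h
  obtain ⟨l, hl, hρ⟩ := h
  rw [List.mem_map] at hl
  obtain ⟨p, hp, rfl⟩ := hl
  rw [tracePiece, List.mem_map] at hρ
  obtain ⟨r, hr, rfl⟩ := hρ
  exact ⟨p, hp, r, hr, rfl⟩

/-- Facts about a run of a piece. -/
theorem run_facts {p : List V} {r : List (V × V)}
    (hchain : p.Chain' T.Adj)
    (hr : r ∈ runs (touches σ a' b') (listArcs p)) :
    r ≠ [] ∧ (∀ e ∈ r, touches σ a' b' e = true) ∧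
    r.Chain' (fun e f => e.2 = f.1) ∧
    listArcs (arcRunToVerts r) = r ∧
    arcRunToVerts r <:+: p ∧
    (∀ e ∈ r, e ∈ listArcs p) ∧
    (∀ e ∈ r, T.Adj e.1 e.2) := by
  have h1 := runs_mem _ _ r hr
  have hinf := runs_infix _ _ r hr
  have hcomp : r.Chain' (fun e f => e.2 = f.1) :=
    (listArcs_chain'_comp p).infix hinf
  have hLA := listArcs_arcRunToVerts r hcomp
  have hvinf := arcRunToVerts_infix p r h1.1 hinf
  exact ⟨h1.1, h1.2, hcomp, hLA, hvinf, fun e he => hinf.subset he,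
    fun e he => (listArcs_chain_iff p).1 hchain e (hinf.subset he)⟩

theorem tracePiece_sub {p ρ : List V} (hρ : ρ ∈ tracePiece σ a' b' p) :
    ∀ e ∈ listArcs ρ, e ∈ listArcs p := by
  rw [tracePiece, List.mem_map] at hρ
  obtain ⟨r, hr, rfl⟩ := hρ
  intro e he
  have hinf := runs_infix _ _ r hr
  have hcomp : r.Chain' (fun e f => e.2 = f.1) :=
    (listArcs_chain'_comp p).infix hinf
  rw [listArcs_arcRunToVerts r hcomp] at he
  exact hinf.subset he

theorem traceScat_pairwise (P : ScatPath T σ a b) :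
    List.Pairwise (fun ρ ρ' => ∀ e ∈ listArcs ρ, e ∉ listArcs ρ')
      (traceScat P a' b') := by
  rw [traceScat, List.pairwise_flatten]
  constructor
  · intro l hl
    rw [List.mem_map] at hl
    obtain ⟨p, hp, rfl⟩ := hl
    rw [tracePiece, List.pairwise_map]
    have hnd : (runs (touches σ a' b') (listArcs p)).flatten.Nodup :=
      (runs_flatten_sublist _ _).nodup (listArcs_nodup (P.nodup p hp))
    have hpw := (List.nodup_flatten.1 hnd).2
    refine hpw.imp_of_mem ?_
    intro r s hr hs hdisj e he1 he2
    have f1 := run_facts (P.chain p hp) hr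
    have f2 := run_facts (P.chain p hp) hs
    rw [f1.2.2.2.1] at he1
    rw [f2.2.2.2.1] at he2
    exact hdisj he1 he2
  · have hpw : List.Pairwise (fun pL pL' => ∀ e ∈ listArcs pL, e ∉ listArcs pL')
        P.pieces := by
      rw [List.pairwise_iff_getElem]
      intro i j hi hj hij e he
      have := P.arc_disj i j hij hj e (by rwa [List.getD_eq_getElem _ _ hi])
      rwa [List.getD_eq_getElem _ _ hj] at this
    rw [List.pairwise_map]
    refine hpw.imp_of_mem ?_
    intro p p' hp hp' hdis ρ hρ ρ' hρ' e he he'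
    exact hdis e (tracePiece_sub hρ e he) (tracePiece_sub hρ' e he')

noncomputable def traceSP (hσ : IsOrdering σ) (h₁ : a ≤ a') (h₂ : a' ≤ b')
    (h₃ : b' ≤ b) (hb : b ≤ Fintype.card V) (P : ScatPath T σ a b) :
    ScatPath T σ a' b' where
  pieces := traceScat P a' b'
  two_le := by
    intro ρ hρ
    obtain ⟨p, hp, r, hr, rfl⟩ := mem_traceScat hρ
    exact arcRunToVerts_two_le (runs_mem _ _ r hr).1
  chain := by
    intro ρ hρ
    obtain ⟨p, hp, r, hr, rfl⟩ := mem_traceScat hρ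
    have f := run_facts (P.chain p hp) hr
    rw [listArcs_chain_iff, f.2.2.2.1]
    exact f.2.2.2.2.2.2
  nodup := by
    intro ρ hρ
    obtain ⟨p, hp, r, hr, rfl⟩ := mem_traceScat hρ
    have f := run_facts (P.chain p hp) hr
    exact (P.nodup p hp).sublist f.2.2.2.2.1.sublist
  allowed := by
    intro ρ hρ e he
    obtain ⟨p, hp, r, hr, rfl⟩ := mem_traceScat hρ
    have f := run_facts (P.chain p hp) hr
    rw [f.2.2.2.1] at he
    exact mem_allowed_of_touch hσ (f.2.2.2.2.2.2 e he)
      (touches_iff.1 (f.2.1 e he))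
  arc_disj := by
    intro i j hij hj e hei hej
    have hpw := traceScat_pairwise (a' := a') (b' := b') P
    rw [List.pairwise_iff_getElem] at hpw
    have hi : i < (traceScat P a' b').length := lt_trans hij hj
    have h := hpw i j hi hj hij e
      (by rw [List.getD_eq_getElem _ [] hi] at hei; exact hei)
    rw [← List.getD_eq_getElem _ [] hj] at h
    exact h hej
  first_cond := by
    intro i hi0 hilen e he
    set L := P.pieces.map (tracePiece σ a' b') with hL
    have hflat : traceScat P a' b' = L.flatten := rfl
    rw [hflat] at hilen he
    obtain ⟨k, j, hk, hj, hval, hfst, _⟩ := flatten_getD_spec [] L i hilen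
    have hkP : k < P.pieces.length := by simpa [hL] using hk
    set p : List V := P.pieces.getD k [] with hpdef
    have hp : p ∈ P.pieces := getD_mem _ _ k hkP
    have hLk : L.getD k [] = tracePiece σ a' b' p := getD_map_getD _ _ [] [] k hkP
    rw [hLk] at hval hj
    have hjr : j < (runs (touches σ a' b') (listArcs p)).length := by
      simpa [tracePiece] using hj
    set r : List (V × V) := (runs (touches σ a' b') (listArcs p)).getD j [] with hrdef
    have hrmem : r ∈ runs (touches σ a' b') (listArcs p) := getD_mem _ _ j hjr
    have hval' : (L.flatten.getD i []) = arcRunToVerts r := by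
      rw [hval, tracePiece, getD_map_getD _ _ [] [] j hjr]
    rw [hval', firstArc_arcRunToVerts] at he
    have f := run_facts (P.chain p hp) hrmem
    have hemem : e ∈ r := List.mem_of_mem_head? (by rw [he]; rfl)
    have hadj : T.Adj e.1 e.2 := f.2.2.2.2.2.2 e hemem
    have hspec := runs_head_spec (listArcs p) j e (by rw [← hrdef, he])
    have h1J : e.1 ∉ interval σ a' b' := by
      rcases hspec with ⟨hj', hhead⟩ | ⟨y, hy1, hy2⟩
      · -- first run of piece k; need k > 0
        rcases hfst hi0 with hj0 | hk0
        · omega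
        · have := P.first_cond k hk0 hkP e hhead
          rcases this with h | h
          · exact notmem_interval_of_outer h₁ h₃ (Or.inl h.2.1.2)
          · exact notmem_interval_of_outer h₁ h₃ (Or.inr h.2.1.1)
      · have hcomp2 : y.2 = e.1 := by
          have := (listArcs_chain'_comp p).infix hy2
          simp only [List.Chain', List.isChain_cons_cons] at this
          exact this.1
        rw [← hcomp2]
        exact (touches_false hy1).2
    have h2J : e.2 ∈ interval σ a' b' := by
      rcases touches_iff.1 (f.2.1 e hemem) with h | h
      · exact absurd h h1J
      · exact h
    exact mem_gdMinus hσ hadj h1J h2J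
  last_cond := by
    intro i hilen e he
    set L := P.pieces.map (tracePiece σ a' b') with hL
    have hflat : traceScat P a' b' = L.flatten := rfl
    rw [hflat] at hilen he
    have hi : i < L.flatten.length := by omega
    obtain ⟨k, j, hk, hj, hval, _, hlst⟩ := flatten_getD_spec [] L i hi
    have hkP : k < P.pieces.length := by simpa [hL] using hk
    set p : List V := P.pieces.getD k [] with hpdef
    have hp : p ∈ P.pieces := getD_mem _ _ k hkP
    have hLk : L.getD k [] = tracePiece σ a' b' p := getD_map_getD _ _ [] [] k hkP
    rw [hLk] at hval hj hlst
    have hjr : j < (runs (touches σ a' b') (listArcs p)).length := by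
      simpa [tracePiece] using hj
    set r : List (V × V) := (runs (touches σ a' b') (listArcs p)).getD j [] with hrdef
    have hrmem : r ∈ runs (touches σ a' b') (listArcs p) := getD_mem _ _ j hjr
    have hval' : (L.flatten.getD i []) = arcRunToVerts r := by
      rw [hval, tracePiece, getD_map_getD _ _ [] [] j hjr]
    have f := run_facts (P.chain p hp) hrmem
    rw [hval', lastArc_arcRunToVerts r f.2.2.1] at he
    have hemem : e ∈ r := by
      have := List.mem_of_mem_getLast? (by rw [he]; rfl)
      exact this
    have hadj : T.Adj e.1 e.2 := f.2.2.2.2.2.2 e hemem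
    have hspec := runs_last_spec (listArcs p) j e (by rw [← hrdef, he])
    have h2J : e.2 ∉ interval σ a' b' := by
      rcases hspec with ⟨hj', hlast⟩ | ⟨y, hy1, hy2⟩
      · -- last run of piece k; need k + 1 < pieces.length
        rcases hlst hilen with hj1 | hk1
        · exfalso
          rw [tracePiece, List.length_map] at hj1
          have : 0 < (runs (touches σ a' b') (listArcs p)).length := by omega
          omega
        · have hk1' : k + 1 < P.pieces.length := by simpa [hL] using hk1
          have := P.last_cond k hk1' e hlast
          rcases this with h | h
          · exact notmem_interval_of_outer h₁ h₃ (Or.inr h.2.2.1)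
          · exact notmem_interval_of_outer h₁ h₃ (Or.inl h.2.2.2)
      · have hcomp2 : e.2 = y.1 := by
          have := (listArcs_chain'_comp p).infix hy2
          simp only [List.Chain', List.isChain_cons_cons] at this
          exact this.1
        rw [hcomp2]
        exact (touches_false hy1).1
    have h1J : e.1 ∈ interval σ a' b' := by
      rcases touches_iff.1 (f.2.1 e hemem) with h | h
      · exact h
      · exact absurd h h2J
    exact mem_gdPlus hσ hadj h1J h2J

end TraceConstruction

section FirstLast
variable {T : Digr V} {σ : V → ℕ} {a b a' b' : ℕ}

theorem First_eq_some_iff {c d : ℕ} {P : ScatPath T σ c d} {v : V} :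
    P.First = some v ↔ ∃ p e, P.pieces.head? = some p ∧ firstArc p = some e ∧
      e ∈ (T.induce (interval σ c d)).arcs ∪ gPlus T σ c d ∪ dPlus T σ c d ∧
      e.1 = v := by
  unfold ScatPath.First
  rcases hp : P.pieces.head? with _ | p
  · simp only [hp]
    simp [hp]
  · simp only [hp]
    rcases he : firstArc p with _ | e
    · simp only [he]
      simp [hp, he]
    · simp only [he]
      by_cases hmem : e ∈ (T.induce (interval σ c d)).arcs ∪ gPlus T σ c d ∪
          dPlus T σ c d
      · rw [if_pos hmem]
        constructor
        · intro h
          obtain rfl : e.1 = v := by simpa using h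
          exact ⟨p, e, rfl, he, hmem, rfl⟩
        · rintro ⟨p', e', hp', he', hmem', rfl⟩
          obtain rfl : p = p' := by simpa using hp'
          obtain rfl : e = e' := by rw [he] at he'; simpa using he'
          rfl
      · rw [if_neg hmem]
        constructor
        · intro h; simp at h
        · rintro ⟨p', e', hp', he', hmem', rfl⟩
          obtain rfl : p = p' := by simpa using hp'
          obtain rfl : e = e' := by rw [he] at he'; simpa using he'
          exact absurd hmem' hmem

theorem Last_eq_some_iff {c d : ℕ} {P : ScatPath T σ c d} {v : V} :
    P.Last = some v ↔ ∃ p e, P.pieces.getLast? = some p ∧ lastArc p = some e ∧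
      e ∈ (T.induce (interval σ c d)).arcs ∪ gMinus T σ c d ∪ dMinus T σ c d ∧
      e.2 = v := by
  unfold ScatPath.Last
  rcases hp : P.pieces.getLast? with _ | p
  · simp only [hp]
    simp [hp]
  · simp only [hp]
    rcases he : lastArc p with _ | e
    · simp only [he]
      simp [hp, he]
    · simp only [he]
      by_cases hmem : e ∈ (T.induce (interval σ c d)).arcs ∪ gMinus T σ c d ∪
          dMinus T σ c d
      · rw [if_pos hmem]
        constructor
        · intro h
          obtain rfl : e.2 = v := by simpa using h
          exact ⟨p, e, rfl, he, hmem, rfl⟩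
        · rintro ⟨p', e', hp', he', hmem', rfl⟩
          obtain rfl : p = p' := by simpa using hp'
          obtain rfl : e = e' := by rw [he] at he'; simpa using he'
          rfl
      · rw [if_neg hmem]
        constructor
        · intro h; simp at h
        · rintro ⟨p', e', hp', he', hmem', rfl⟩
          obtain rfl : p = p' := by simpa using hp'
          obtain rfl : e = e' := by rw [he] at he'; simpa using he'
          exact absurd hmem' hmem

theorem head?_getD {α : Type} (l : List α) (d : α) (h : 0 < l.length) :
    l.head? = some (l.getD 0 d) := by
  rcases l with _ | ⟨x, t⟩
  · simp at h
  · rfl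

variable (hσ : IsOrdering σ) (h₁ : a ≤ a') (h₂ : a' ≤ b') (h₃ : b' ≤ b)
  (hb : b ≤ Fintype.card V) (P : ScatPath T σ a b)

theorem traceSP_First_some {v : V}
    (h : (traceSP hσ h₁ h₂ h₃ hb P).First = some v) :
    P.First = some v ∧ v ∈ interval σ a' b' := by
  rw [First_eq_some_iff] at h
  obtain ⟨ρ, e, hρ, hfa, hmem, rfl⟩ := h
  have hρ' : (P.pieces.map (tracePiece σ a' b')).flatten.head? = some ρ := hρ
  obtain ⟨k, hk, hh, hprev⟩ := flatten_head_spec _ ρ hρ'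
  have hkP : k < P.pieces.length := by simpa using hk
  set p : List V := P.pieces.getD k [] with hpdef
  have hp : p ∈ P.pieces := getD_mem _ _ k hkP
  rw [getD_map_getD _ _ [] [] k hkP] at hh
  rw [tracePiece, List.head?_map] at hh
  rcases hrh : (runs (touches σ a' b') (listArcs p)).head? with _ | r
  · rw [hrh] at hh; simp at hh
  · rw [hrh] at hh
    obtain rfl : arcRunToVerts r = ρ := by simpa using hh
    have hr0 : (runs (touches σ a' b') (listArcs p)).getD 0 [] = r := by
      rcases hrr : runs (touches σ a' b') (listArcs p) with _ | ⟨r0, rs⟩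
      · rw [hrr] at hrh; simp at hrh
      · rw [hrr] at hrh
        simp only [List.head?_cons, Option.some.injEq] at hrh
        simpa using hrh
    have hrmem : r ∈ runs (touches σ a' b') (listArcs p) :=
      List.mem_of_mem_head? (by rw [hrh]; rfl)
    have f := run_facts (P.chain p hp) hrmem
    rw [firstArc_arcRunToVerts] at hfa
    have hemem : e ∈ r := List.mem_of_mem_head? (by rw [hfa]; rfl)
    have hadj : T.Adj e.1 e.2 := f.2.2.2.2.2.2 e hemem
    have hbb' : b' ≤ Fintype.card V := le_trans h₃ hb
    have h1J : e.1 ∈ interval σ a' b' := (mem_firstSet_iff hσ hbb' hadj).1 hmem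
    have hspec := runs_head_spec (listArcs p) 0 e (by rw [hr0, hfa])
    have hhead : (listArcs p).head? = some e := by
      rcases hspec with ⟨_, hd⟩ | ⟨y, hy1, hy2⟩
      · exact hd
      · exfalso
        have hcomp2 : y.2 = e.1 := by
          have := (listArcs_chain'_comp p).infix hy2
          simp only [List.Chain', List.isChain_cons_cons] at this
          exact this.1
        exact (touches_false hy1).2 (hcomp2 ▸ h1J)
    have hk0 : k = 0 := by
      by_contra hk0
      have := P.first_cond k (by omega) hkP e hhead
      rcases this with h | h
      · exact notmem_interval_of_outer h₁ h₃ (Or.inl h.2.1.2) h1J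
      · exact notmem_interval_of_outer h₁ h₃ (Or.inr h.2.1.1) h1J
    subst hk0
    have h1I : e.1 ∈ interval σ a b := by
      rcases h1J with ⟨u1, u2⟩
      exact ⟨by omega, by omega⟩
    refine ⟨First_eq_some_iff.2 ⟨p, e, ?_, hhead, (mem_firstSet_iff hσ hb hadj).2 h1I,
      rfl⟩, h1J⟩
    exact head?_getD _ _ hkP

theorem traceSP_First_of {v : V} (h : P.First = some v)
    (hv : v ∈ interval σ a' b') :
    (traceSP hσ h₁ h₂ h₃ hb P).First = some v := by
  rw [First_eq_some_iff] at h
  obtain ⟨p, e, hph, hfa, hmem, rfl⟩ := h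
  have hp : p ∈ P.pieces := List.mem_of_mem_head? (by rw [hph]; rfl)
  have htouch : touches σ a' b' e = true := touches_iff.2 (Or.inl hv)
  rcases hla : listArcs p with _ | ⟨e0, rest⟩
  · rw [firstArc, hla] at hfa; simp at hfa
  · have he0 : e0 = e := by
      rw [firstArc, hla] at hfa; simpa using hfa
    subst he0
    obtain ⟨r0, rs, hruns, hr0h, _⟩ := runs_pos_head (touches σ a' b') rest e0 htouch
    rw [← hla] at hruns
    obtain ⟨qs, hPp⟩ : ∃ qs, P.pieces = p :: qs := by
      rcases hPq : P.pieces with _ | ⟨q, qs⟩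
      · rw [hPq] at hph; simp at hph
      · rw [hPq] at hph
        have hqp : q = p := by simpa using hph
        exact ⟨qs, by rw [hqp]⟩
    have hQh : (traceScat P a' b').head? = some (arcRunToVerts r0) := by
      have hTS : traceScat P a' b' = tracePiece σ a' b' p ++
          ((qs.map (tracePiece σ a' b')).flatten) := by
        rw [traceScat, hPp]; rfl
      rw [hTS, List.head?_append, tracePiece, hruns]
      simp
    have hrmem : r0 ∈ runs (touches σ a' b') (listArcs p) := by
      rw [hruns]; exact List.mem_cons_self
    have f := run_facts (P.chain p hp) hrmem
    have hadj : T.Adj e0.1 e0.2 := by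
      refine (listArcs_chain_iff p).1 (P.chain p hp) e0 ?_
      rw [hla]; exact List.mem_cons_self
    have hbb' : b' ≤ Fintype.card V := le_trans h₃ hb
    refine First_eq_some_iff.2 ⟨arcRunToVerts r0, e0, hQh, ?_, ?_, rfl⟩
    · rw [firstArc_arcRunToVerts]; exact hr0h
    · exact (mem_firstSet_iff hσ hbb' hadj).2 hv

theorem traceSP_Last_some {v : V}
    (h : (traceSP hσ h₁ h₂ h₃ hb P).Last = some v) :
    P.Last = some v ∧ v ∈ interval σ a' b' := by
  rw [Last_eq_some_iff] at h
  obtain ⟨ρ, e, hρ, hfa, hmem, rfl⟩ := h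
  have hρ' : (P.pieces.map (tracePiece σ a' b')).flatten.getLast? = some ρ := hρ
  obtain ⟨k, hk, hh, hnext⟩ := flatten_getLast_spec _ ρ hρ'
  have hkP : k < P.pieces.length := by simpa using hk
  set p : List V := P.pieces.getD k [] with hpdef
  have hp : p ∈ P.pieces := getD_mem _ _ k hkP
  rw [getD_map_getD _ _ [] [] k hkP] at hh
  rw [tracePiece, List.getLast?_map] at hh
  rcases hrh : (runs (touches σ a' b') (listArcs p)).getLast? with _ | r
  · rw [hrh] at hh; simp at hh
  · rw [hrh] at hh
    obtain rfl : arcRunToVerts r = ρ := by simpa using hh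
    set N := (runs (touches σ a' b') (listArcs p)).length with hN
    have hrlast : (runs (touches σ a' b') (listArcs p)).getD (N - 1) [] = r := by
      rw [List.getD_eq_getElem?_getD, ← List.getLast?_eq_getElem?, hrh]; rfl
    have hrmem : r ∈ runs (touches σ a' b') (listArcs p) :=
      List.mem_of_mem_getLast? (by rw [hrh]; rfl)
    have f := run_facts (P.chain p hp) hrmem
    rw [lastArc_arcRunToVerts r f.2.2.1] at hfa
    have hemem : e ∈ r := List.mem_of_mem_getLast? (by rw [hfa]; rfl)
    have hadj : T.Adj e.1 e.2 := f.2.2.2.2.2.2 e hemem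
    have hbb' : b' ≤ Fintype.card V := le_trans h₃ hb
    have h2J : e.2 ∈ interval σ a' b' := (mem_lastSet_iff hσ hbb' hadj).1 hmem
    have hspec := runs_last_spec (listArcs p) (N - 1) e (by rw [hrlast, hfa])
    have hlast : (listArcs p).getLast? = some e := by
      rcases hspec with ⟨_, hd⟩ | ⟨y, hy1, hy2⟩
      · exact hd
      · exfalso
        have hcomp2 : e.2 = y.1 := by
          have := (listArcs_chain'_comp p).infix hy2
          simp only [List.Chain', List.isChain_cons_cons] at this
          exact this.1
        exact (touches_false hy1).1 (hcomp2 ▸ h2J)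
    have hklast : k = P.pieces.length - 1 := by
      by_contra hkl
      have hk1 : k + 1 < P.pieces.length := by omega
      have := P.last_cond k hk1 e hlast
      rcases this with h | h
      · exact notmem_interval_of_outer h₁ h₃ (Or.inr h.2.2.1) h2J
      · exact notmem_interval_of_outer h₁ h₃ (Or.inl h.2.2.2) h2J
    have hPlast : P.pieces.getLast? = some p := by
      rw [List.getLast?_eq_getElem?, hpdef, hklast, List.getD_eq_getElem?_getD]
      rcases hge : P.pieces[P.pieces.length - 1]? with _ | q
      · rw [List.getElem?_eq_none_iff] at hge; omega
      · rfl
    have h2I : e.2 ∈ interval σ a b := by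
      rcases h2J with ⟨u1, u2⟩
      exact ⟨by omega, by omega⟩
    exact ⟨Last_eq_some_iff.2 ⟨p, e, hPlast, hlast,
      (mem_lastSet_iff hσ hb hadj).2 h2I, rfl⟩, h2J⟩

theorem traceSP_Last_of {v : V} (h : P.Last = some v)
    (hv : v ∈ interval σ a' b') :
    (traceSP hσ h₁ h₂ h₃ hb P).Last = some v := by
  rw [Last_eq_some_iff] at h
  obtain ⟨p, e, hph, hfa, hmem, rfl⟩ := h
  have hp : p ∈ P.pieces := List.mem_of_mem_getLast? (by rw [hph]; rfl)
  have htouch : touches σ a' b' e = true := touches_iff.2 (Or.inr hv)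
  have hlast : (listArcs p).getLast? = some e := hfa
  obtain ⟨rs, r, hruns, hrl⟩ := runs_pos_last (listArcs p) e htouch hlast
  have hrmem : r ∈ runs (touches σ a' b') (listArcs p) := by
    rw [hruns]; exact List.mem_append_right _ (List.mem_cons_self)
  have f := run_facts (P.chain p hp) hrmem
  have hQl : (traceScat P a' b').getLast? = some (arcRunToVerts r) := by
    obtain ⟨Ps, hPs⟩ := List.getLast?_eq_some_iff.1 hph
    have : traceScat P a' b' =
        (Ps.map (tracePiece σ a' b')).flatten ++ tracePiece σ a' b' p := by
      rw [traceScat, hPs]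
      simp
    rw [this, List.getLast?_append, tracePiece, hruns]
    simp
  have hadj : T.Adj e.1 e.2 := f.2.2.2.2.2.2 e (List.mem_of_mem_getLast?
    (by rw [hrl]; rfl))
  have hbb' : b' ≤ Fintype.card V := le_trans h₃ hb
  refine Last_eq_some_iff.2 ⟨arcRunToVerts r, e, hQl, ?_, ?_, rfl⟩
  · rw [lastArc_arcRunToVerts r f.2.2.1]; exact hrl
  · exact (mem_lastSet_iff hσ hbb' hadj).2 hv

end FirstLast

section Final
variable {T : Digr V} {σ : V → ℕ} {a b a' b' : ℕ}

theorem traceSP_arcSet (hσ : IsOrdering σ) (h₁ : a ≤ a') (h₂ : a' ≤ b')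
    (h₃ : b' ≤ b) (hb : b ≤ Fintype.card V) (P : ScatPath T σ a b) :
    ∀ x ∈ (traceSP hσ h₁ h₂ h₃ hb P).arcSet, x ∈ P.arcSet := by
  intro x hx
  obtain ⟨ρ, hρ, hxρ⟩ := hx
  obtain ⟨p, hp, r, hr, rfl⟩ := mem_traceScat hρ
  have f := run_facts (P.chain p hp) hr
  rw [f.2.2.2.1] at hxρ
  exact ⟨p, hp, f.2.2.2.2.2.1 x hxρ⟩

end Final

/-- the trace of a partial immersion on a subinterval `σ(a',b'] ⊆ σ(a,b]`
is again a partial immersion, and each of its scattered paths is the trace of the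
corresponding scattered path. -/
theorem trace_is_partial_immersion
    {VH : Type} [Fintype VH] (H : Digr VH) (T : Digr V) (hT : T.IsTournament)
    (σ : V → ℕ) (hσ : IsOrdering σ)
    (a b a' b' : ℕ) (h₁ : a ≤ a') (h₂ : a' ≤ b') (h₃ : b' ≤ b) (hb : b ≤ Fintype.card V)
    (φ : PartialImm H T σ a b) :
    (∀ (e : VH × VH) (he : H.Adj e.1 e.2),
      ∃ Q : ScatPath T σ a' b', Q.pieces = traceScat (φ.sp e he) a' b') ∧
    ∃ ψ : PartialImm H T σ a' b', ψ.IsTraceOf φ := by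
  constructor
  · intro e he
    exact ⟨traceSP hσ h₁ h₂ h₃ hb (φ.sp e he), rfl⟩
  · refine ⟨⟨fun e he => traceSP hσ h₁ h₂ h₃ hb (φ.sp e he), ?_, ?_, ?_, ?_, ?_⟩,
      fun e he => rfl⟩
    · intro e he e' he' hne x hx hx'
      exact φ.arc_disj e he e' he' hne x
        (traceSP_arcSet hσ h₁ h₂ h₃ hb (φ.sp e he) x hx)
        (traceSP_arcSet hσ h₁ h₂ h₃ hb (φ.sp e' he') x hx')
    · intro e he e' he' h1
      have hP := φ.first_eq e he e' he' h1
      rcases hQ : (traceSP hσ h₁ h₂ h₃ hb (φ.sp e he)).First with _ | v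
      · rcases hQ' : (traceSP hσ h₁ h₂ h₃ hb (φ.sp e' he')).First with _ | v'
        · rfl
        · exfalso
          obtain ⟨hPf, hvJ⟩ := traceSP_First_some hσ h₁ h₂ h₃ hb _ hQ'
          rw [← hP] at hPf
          rw [traceSP_First_of hσ h₁ h₂ h₃ hb _ hPf hvJ] at hQ
          exact absurd hQ (by simp)
      · obtain ⟨hPf, hvJ⟩ := traceSP_First_some hσ h₁ h₂ h₃ hb _ hQ
        rw [hP] at hPf
        rw [traceSP_First_of hσ h₁ h₂ h₃ hb _ hPf hvJ]
    · intro e he e' he' v h h'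
      exact φ.first_inj e he e' he' v
        (traceSP_First_some hσ h₁ h₂ h₃ hb _ h).1
        (traceSP_First_some hσ h₁ h₂ h₃ hb _ h').1
    · intro e he e' he' h1
      have hP := φ.last_eq e he e' he' h1
      rcases hQ : (traceSP hσ h₁ h₂ h₃ hb (φ.sp e he)).Last with _ | v
      · rcases hQ' : (traceSP hσ h₁ h₂ h₃ hb (φ.sp e' he')).Last with _ | v'
        · rfl
        · exfalso
          obtain ⟨hPf, hvJ⟩ := traceSP_Last_some hσ h₁ h₂ h₃ hb _ hQ'
          rw [← hP] at hPf
          rw [traceSP_Last_of hσ h₁ h₂ h₃ hb _ hPf hvJ] at hQ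
          exact absurd hQ (by simp)
      · obtain ⟨hPf, hvJ⟩ := traceSP_Last_some hσ h₁ h₂ h₃ hb _ hQ
        rw [hP] at hPf
        rw [traceSP_Last_of hσ h₁ h₂ h₃ hb _ hPf hvJ]
    · intro e he e' he' v h h'
      exact φ.last_inj e he e' he' v
        (traceSP_Last_some hσ h₁ h₂ h₃ hb _ h).1
        (traceSP_Last_some hσ h₁ h₂ h₃ hb _ h').1

end Scat
end TournamentPaper
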